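/- arXiv:2006.09893 — 2 statements merged into one kernel-verified Lean document; each statement's English description precedes it below -/
import Mathlib

section
/- Let ν ≥ 0, α > 0 and let f be continuous on (0,∞) with compact support contained in (0,∞). Then for every x > 0, (IB^α_{ν,−} f)(x) = 2^{−2α} · (J^{2α, (ν−1)/2−α, −α} g)(x²), where g(t) = t^{(ν−1)/2} f(√t); that is, the fractional Bessel integral on the half-line is expressed through the Saigo fractional integral. -/
open MeasureTheory Set

/-- The Gauss hypergeometric function `₂F₁(a,b;c;z)` defined by its power series. -/
noncomputable def hyp2F1 (a b c z : ℝ) : ℝ :=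
  ∑' k : ℕ, ((ascPochhammer ℝ k).eval a * (ascPochhammer ℝ k).eval b /
    ((ascPochhammer ℝ k).eval c * (k.factorial : ℝ))) * z ^ k

/-- The fractional Bessel integral on the half-line `IB^α_{ν,-}`. -/
noncomputable def besselFracInt (ν α : ℝ) (f : ℝ → ℝ) (x : ℝ) : ℝ :=
  (1 / Real.Gamma (2 * α)) * ∫ y in Set.Ioi x,
    ((y^2 - x^2) / (2 * y)) ^ (2 * α - 1) *
      hyp2F1 (α + (ν - 1) / 2) α (2 * α) (1 - x^2 / y^2) * f y

/-- The Saigo fractional integral `J^{γ,β,η}`. -/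
noncomputable def saigoFracInt (γ β η : ℝ) (h : ℝ → ℝ) (x : ℝ) : ℝ :=
  (1 / Real.Gamma γ) * ∫ t in Set.Ioi x,
    (t - x) ^ (γ - 1) * t ^ (-γ - β) * hyp2F1 (γ + β) (-η) γ (1 - x / t) * h t

/-- The fractional Bessel integral on the half-line is expressed through the Saigo
fractional integral: `IB^α_{ν,-} f (x) = 2^{-2α} J^{2α,(ν-1)/2-α,-α} g (x²)` with
`g(t) = t^{(ν-1)/2} f(√t)`. -/
theorem besselFracInt_eq_saigo (ν α : ℝ) (hν : 0 ≤ ν) (hα : 0 < α)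
    (f : ℝ → ℝ) (hf : ContinuousOn f (Set.Ioi 0)) (hsupp : HasCompactSupport f)
    (hpos : tsupport f ⊆ Set.Ioi 0) :
    ∀ x > (0:ℝ),
      besselFracInt ν α f x =
        (2:ℝ) ^ (-(2 * α)) *
          saigoFracInt (2 * α) ((ν - 1) / 2 - α) (-α)
            (fun t => t ^ ((ν - 1) / 2) * f (Real.sqrt t)) (x^2) := by
  intro x hx
  unfold besselFracInt saigoFracInt
  have himg : Set.Ioi (x^2) = (fun y => y^2) '' Set.Ioi x := by
    ext t
    simp only [mem_Ioi, mem_image]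
    constructor
    · intro ht
      have ht0 : (0:ℝ) ≤ t := le_of_lt (lt_trans (by positivity) ht)
      refine ⟨Real.sqrt t, ?_, Real.sq_sqrt ht0⟩
      rw [show x = Real.sqrt (x^2) by rw [Real.sqrt_sq hx.le]]
      exact Real.sqrt_lt_sqrt (by positivity) ht
    · rintro ⟨y, hy, rfl⟩
      exact pow_lt_pow_left₀ hy hx.le two_ne_zero
  have hderiv : ∀ y ∈ Set.Ioi x, HasDerivWithinAt (fun y : ℝ => y^2) (2*y) (Set.Ioi x) y := by
    intro y _
    simpa using (hasDerivAt_pow 2 y).hasDerivWithinAt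
  have hinj : Set.InjOn (fun y : ℝ => y^2) (Set.Ioi x) := by
    intro a ha b hb hab
    simp only at hab
    have ha' : (0:ℝ) ≤ a := le_of_lt (lt_trans hx ha)
    have hb' : (0:ℝ) ≤ b := le_of_lt (lt_trans hx hb)
    have h := congrArg Real.sqrt hab
    rwa [Real.sqrt_sq ha', Real.sqrt_sq hb'] at h
  rw [himg, integral_image_eq_integral_abs_deriv_smul measurableSet_Ioi hderiv hinj]
  rw [show (2*α + ((ν-1)/2 - α)) = α + (ν-1)/2 by ring, show -(-α) = α by ring]
  have key : ∀ y ∈ Set.Ioi x,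
      |2*y| • ((y^2 - x^2) ^ (2*α - 1) * (y^2 : ℝ) ^ (-(2*α) - ((ν-1)/2 - α)) *
        hyp2F1 (α + (ν-1)/2) α (2*α) (1 - x^2 / y^2) *
        ((y^2 : ℝ) ^ ((ν-1)/2) * f (Real.sqrt (y^2)))) =
      (2:ℝ)^(2*α) *
        (((y^2 - x^2) / (2*y)) ^ (2*α - 1) *
          hyp2F1 (α + (ν-1)/2) α (2*α) (1 - x^2 / y^2) * f y) := by
    intro y hy
    have hy0 : (0:ℝ) < y := lt_trans hx hy
    have hu : (0:ℝ) < y^2 - x^2 := by nlinarith [mem_Ioi.mp hy]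
    have h2y : (0:ℝ) < 2*y := by linarith
    have hS : ((2*y:ℝ))^(2*α-1) ≠ 0 := (Real.rpow_pos_of_pos h2y _).ne'
    rw [Real.sqrt_sq hy0.le, smul_eq_mul, abs_of_pos h2y]
    rw [Real.div_rpow hu.le h2y.le]
    have e1 : (y^2 : ℝ) ^ (-(2*α) - ((ν-1)/2 - α)) * (y^2 : ℝ) ^ ((ν-1)/2)
        = (y : ℝ) ^ (-(2*α)) := by
      rw [← Real.rpow_add (by positivity), show (-(2*α) - ((ν-1)/2 - α)) + (ν-1)/2 = -α by ring,
        ← Real.rpow_natCast y 2, ← Real.rpow_mul hy0.le]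
      norm_num
    have e2 : (2*y : ℝ) ^ (2*α - 1) = (2:ℝ)^(2*α - 1) * y ^ (2*α-1) :=
      Real.mul_rpow (by norm_num) hy0.le
    have e4 : 2 * y * y^(-(2*α)) * y^(2*α-1) = 2 := by
      rw [mul_assoc, ← Real.rpow_add hy0, show -(2*α) + (2*α-1) = -1 by ring,
        Real.rpow_neg_one]
      field_simp
    have e3 : (2:ℝ)^(2*α) = 2 * (2:ℝ)^(2*α-1) := by
      rw [show 2*α = 1 + (2*α-1) by ring, Real.rpow_add (by norm_num), Real.rpow_one]; norm_num
    have hc : 2*y * ((y^2:ℝ)^(-(2*α) - ((ν-1)/2-α)) * (y^2:ℝ)^((ν-1)/2)) * (2*y)^(2*α-1)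
        = (2:ℝ)^(2*α) := by
      rw [e1, e2, e3]; linear_combination (2:ℝ)^(2*α-1) * e4
    rw [div_eq_mul_inv, ← hc]
    field_simp
  rw [setIntegral_congr_fun measurableSet_Ioi key, MeasureTheory.integral_const_mul]
  have h2 : (2:ℝ)^(-(2*α)) * (2:ℝ)^(2*α) = 1 := by
    rw [← Real.rpow_add (by norm_num)]; norm_num
  linear_combination -((1/Real.Gamma (2*α)) * ∫ y in Set.Ioi x,
    ((y^2 - x^2) / (2*y)) ^ (2*α - 1) *
      hyp2F1 (α + (ν-1)/2) α (2*α) (1 - x^2 / y^2) * f y) * h2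
end

section
/- Let ν ≥ 0 and let g be twice continuously differentiable on (0,∞) with g(y) = 0 for all sufficiently large y. Then the fractional Bessel integral of order 1 inverts the Bessel operator: for every x > 0, (IB^1_{ν,−}(B_ν g))(x) = ∫_x^∞ ((y²−x²)/(2y)) · ₂F₁((ν+1)/2, 1; 2; 1−x²/y²) · (g''(y) + (ν/y) g'(y)) dy = g(x). -/
open MeasureTheory Set

/-- The Bessel operator `B_ν g = g'' + (ν/x) g'`. -/
noncomputable def besselOp (ν : ℝ) (g : ℝ → ℝ) : ℝ → ℝ :=
  fun x => deriv (deriv g) x + (ν / x) * deriv g x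


namespace BesselAux

open Filter


noncomputable def pc (b : ℝ) (k : ℕ) : ℝ := (ascPochhammer ℝ k).eval b / (Nat.factorial k : ℝ)

lemma pc_zero (b : ℝ) : pc b 0 = 1 := by simp [pc]

lemma pc_succ (b : ℝ) (k : ℕ) : pc b (k + 1) * ((k : ℝ) + 1) = (b + k) * pc b k := by
  have hk : (Nat.factorial k : ℝ) ≠ 0 := Nat.cast_ne_zero.mpr (Nat.factorial_ne_zero k)
  simp only [pc, ascPochhammer_succ_eval, Nat.factorial_succ]
  push_cast
  field_simp

lemma pc_ne_zero {b : ℝ} (hb1 : -1 < b) (hb0 : b ≠ 0) : ∀ k, pc b k ≠ 0 := by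
  intro k
  induction k with
  | zero => simp [pc_zero]
  | succ n ih =>
    have h := pc_succ b n
    have hbn : b + (n : ℝ) ≠ 0 := by
      rcases Nat.eq_zero_or_pos n with h0 | h0
      · simpa [h0] using hb0
      · have : (1 : ℝ) ≤ n := by exact_mod_cast h0
        intro hc; linarith
    intro hz
    rw [hz, zero_mul] at h
    rcases mul_eq_zero.mp h.symm with h' | h'
    · exact hbn h'
    · exact ih h'

lemma summable_ub {b : ℝ} (hb1 : -1 < b) (hb0 : b ≠ 0) {r : ℝ} (hr0 : 0 < r) (hr1 : r < 1) :
    Summable (fun k : ℕ => |pc b k| * ((k : ℝ) + 1) * r ^ k / r) := by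
  set f : ℕ → ℝ := fun k => |pc b k| * ((k : ℝ) + 1) * r ^ k / r with hf
  have hfpos : ∀ k, 0 < f k := by
    intro k
    have := abs_pos.mpr (pc_ne_zero hb1 hb0 k)
    positivity
  apply summable_of_ratio_test_tendsto_lt_one hr1
    (Eventually.of_forall fun k => (hfpos k).ne')
  have hratio : ∀ k : ℕ, 1 ≤ k → ‖f (k + 1)‖ / ‖f k‖ =
      ((b + k) / ((k : ℝ) + 1)) * (((k : ℝ) + 2) / ((k : ℝ) + 1)) * r := by
    intro k hk
    have hbn : 0 < b + (k : ℝ) := by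
      have : (1 : ℝ) ≤ k := by exact_mod_cast hk
      linarith
    have hpcn : pc b k ≠ 0 := pc_ne_zero hb1 hb0 k
    have hpc1 : pc b (k + 1) = (b + k) * pc b k / ((k : ℝ) + 1) := by
      have := pc_succ b k
      field_simp
      linarith [this]
    rw [Real.norm_eq_abs, Real.norm_eq_abs, abs_of_pos (hfpos _), abs_of_pos (hfpos _), hf]
    simp only
    rw [hpc1, abs_div, abs_mul, abs_of_pos hbn, abs_of_pos (by positivity : (0:ℝ) < (k:ℝ)+1)]
    have hrk : r ^ k ≠ 0 := by positivity
    have hpca : |pc b k| ≠ 0 := abs_ne_zero.mpr hpcn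
    push_cast
    rw [pow_succ]
    field_simp
    ring
  have ht1 : Tendsto (fun k : ℕ => (b + (k : ℝ)) / ((k : ℝ) + 1)) atTop (nhds 1) := by
    have h0 : Tendsto (fun k : ℕ => (b - 1) / ((k : ℝ) + 1)) atTop (nhds 0) :=
      Tendsto.div_atTop tendsto_const_nhds
        (tendsto_atTop_add_const_right atTop 1 tendsto_natCast_atTop_atTop)
    have : (fun k : ℕ => (b + (k : ℝ)) / ((k : ℝ) + 1)) =
        fun k : ℕ => 1 + (b - 1) / ((k : ℝ) + 1) := by
      funext k
      have : ((k : ℝ) + 1) ≠ 0 := by positivity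
      field_simp
      ring
    rw [this]
    simpa using tendsto_const_nhds.add h0
  have ht2 : Tendsto (fun k : ℕ => ((k : ℝ) + 2) / ((k : ℝ) + 1)) atTop (nhds 1) := by
    have h0 : Tendsto (fun k : ℕ => (1 : ℝ) / ((k : ℝ) + 1)) atTop (nhds 0) :=
      Tendsto.div_atTop tendsto_const_nhds
        (tendsto_atTop_add_const_right atTop 1 tendsto_natCast_atTop_atTop)
    have : (fun k : ℕ => ((k : ℝ) + 2) / ((k : ℝ) + 1)) =
        fun k : ℕ => 1 + (1 : ℝ) / ((k : ℝ) + 1) := by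
      funext k
      have : ((k : ℝ) + 1) ≠ 0 := by positivity
      field_simp
      ring
    rw [this]
    simpa using tendsto_const_nhds.add h0
  have := ((ht1.mul ht2).mul_const r)
  simp only [one_mul] at this
  apply this.congr'
  filter_upwards [eventually_ge_atTop 1] with k hk
  exact (hratio k hk).symm


lemma pow_sub_one_le {r : ℝ} (hr0 : 0 < r) (hr1 : r < 1) (k : ℕ) :
    r ^ (k - 1) ≤ r ^ k / r := by
  cases k with
  | zero =>
    simp only [Nat.zero_sub, pow_zero]
    rw [le_div_iff₀ hr0, one_mul]
    exact hr1.le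
  | succ n => simp [pow_succ, mul_div_assoc, div_self hr0.ne']

lemma norm_term_le {b r : ℝ} (hr0 : 0 < r) (hr1 : r < 1) {y : ℝ} (hy : |y| ≤ r) (k : ℕ) :
    ‖pc b k * ((k : ℝ) * y ^ (k - 1))‖ ≤ |pc b k| * ((k : ℝ) + 1) * r ^ k / r := by
  rw [Real.norm_eq_abs, abs_mul, abs_mul, abs_pow, Nat.abs_cast]
  have h1 : |y| ^ (k - 1) ≤ r ^ (k - 1) := pow_le_pow_left₀ (abs_nonneg y) hy _
  have h2 : r ^ (k - 1) ≤ r ^ k / r := pow_sub_one_le hr0 hr1 k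
  calc |pc b k| * ((k : ℝ) * |y| ^ (k - 1))
      ≤ |pc b k| * (((k : ℝ) + 1) * (r ^ k / r)) := by
        apply mul_le_mul_of_nonneg_left _ (abs_nonneg _)
        apply mul_le_mul (by linarith) (h1.trans h2) (by positivity) (by positivity)
    _ = |pc b k| * ((k : ℝ) + 1) * r ^ k / r := by ring

lemma half_lt_one {y : ℝ} (hy : |y| < 1) : (|y| + 1) / 2 < 1 := by linarith
lemma half_pos' (y : ℝ) : 0 < (|y| + 1) / 2 := by
  have := abs_nonneg y; linarith
lemma lt_half {y : ℝ} (hy : |y| < 1) : |y| < (|y| + 1) / 2 := by linarith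

lemma summable_F {b : ℝ} (hb1 : -1 < b) (hb0 : b ≠ 0) {y : ℝ} (hy : |y| < 1) :
    Summable (fun k : ℕ => pc b k * y ^ k) := by
  set r := (|y| + 1) / 2 with hr
  have hr0 : 0 < r := half_pos' y
  have hr1 : r < 1 := half_lt_one hy
  apply Summable.of_norm_bounded (summable_ub hb1 hb0 hr0 hr1)
  intro k
  rw [Real.norm_eq_abs, abs_mul, abs_pow]
  have h2 : r ^ k ≤ ((k : ℝ) + 1) * (r ^ k / r) := by
    have hd : (1 : ℝ) ≤ ((k : ℝ) + 1) / r := by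
      rw [le_div_iff₀ hr0, one_mul]
      have : (0:ℝ) ≤ k := Nat.cast_nonneg k
      linarith
    calc r ^ k = r ^ k * 1 := by ring
      _ ≤ r ^ k * (((k : ℝ) + 1) / r) := by
          apply mul_le_mul_of_nonneg_left hd (by positivity)
      _ = ((k : ℝ) + 1) * (r ^ k / r) := by ring
  calc |pc b k| * |y| ^ k
      ≤ |pc b k| * r ^ k := by
        apply mul_le_mul_of_nonneg_left
          (pow_le_pow_left₀ (abs_nonneg y) (lt_half hy).le _) (abs_nonneg _)
    _ ≤ |pc b k| * (((k : ℝ) + 1) * (r ^ k / r)) :=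
        mul_le_mul_of_nonneg_left h2 (abs_nonneg _)
    _ = |pc b k| * ((k : ℝ) + 1) * r ^ k / r := by ring

lemma summable_D {b : ℝ} (hb1 : -1 < b) (hb0 : b ≠ 0) {y : ℝ} (hy : |y| < 1) :
    Summable (fun k : ℕ => pc b k * ((k : ℝ) * y ^ (k - 1))) := by
  set r := (|y| + 1) / 2 with hr
  have hr0 : 0 < r := half_pos' y
  have hr1 : r < 1 := half_lt_one hy
  exact Summable.of_norm_bounded (summable_ub hb1 hb0 hr0 hr1)
    (fun k => norm_term_le hr0 hr1 (lt_half hy).le k)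

lemma summable_at_zero (b : ℝ) : Summable (fun k : ℕ => pc b k * (0:ℝ) ^ k) := by
  apply summable_of_ne_finset_zero (s := {0})
  intro k hk
  have : k ≠ 0 := by simpa using hk
  simp [zero_pow this]

lemma hasDerivAt_F {b : ℝ} (hb1 : -1 < b) (hb0 : b ≠ 0) {y : ℝ} (hy : |y| < 1) :
    HasDerivAt (fun z : ℝ => ∑' k : ℕ, pc b k * z ^ k)
      (∑' k : ℕ, pc b k * ((k : ℝ) * y ^ (k - 1))) y := by
  set r := (|y| + 1) / 2 with hr
  have hr0 : 0 < r := half_pos' y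
  have hr1 : r < 1 := half_lt_one hy
  apply hasDerivAt_tsum_of_isPreconnected (summable_ub hb1 hb0 hr0 hr1)
      Metric.isOpen_ball (convex_ball (0:ℝ) r).isPreconnected
      (fun k z _ => (hasDerivAt_pow k z).const_mul (pc b k))
      (fun k z hz => norm_term_le hr0 hr1 (by simpa using (mem_ball_zero_iff.mp hz).le) k)
      (mem_ball_zero_iff.mpr (by simpa using hr0))
      (summable_at_zero b)
  exact mem_ball_zero_iff.mpr (by simpa using lt_half hy)

lemma ode {b : ℝ} (hb1 : -1 < b) (hb0 : b ≠ 0) {y : ℝ} (hy : |y| < 1) :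
    (1 - y) * (∑' k : ℕ, pc b k * ((k : ℝ) * y ^ (k - 1))) =
      b * ∑' k : ℕ, pc b k * y ^ k := by
  have hD := summable_D hb1 hb0 hy
  have h1 : Summable (fun k : ℕ => pc b (k + 1) * (((k : ℝ) + 1) * y ^ k)) := by
    have := (summable_nat_add_iff 1).mpr hD
    apply this.congr
    intro k
    push_cast
    simp
  have h2 : Summable (fun k : ℕ => pc b k * ((k : ℝ) * y ^ k)) := by
    apply (hD.mul_left y).congr
    intro k
    cases k with
    | zero => simp
    | succ n =>
      simp only [Nat.add_sub_cancel]
      push_cast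
      ring
  have hshift : (∑' k : ℕ, pc b k * ((k : ℝ) * y ^ (k - 1))) =
      ∑' k : ℕ, pc b (k + 1) * (((k : ℝ) + 1) * y ^ k) := by
    rw [Summable.tsum_eq_zero_add hD]
    simp only [Nat.cast_zero, zero_mul, mul_zero, zero_add, Nat.add_sub_cancel]
    push_cast
    rfl
  have hyD : y * (∑' k : ℕ, pc b k * ((k : ℝ) * y ^ (k - 1))) =
      ∑' k : ℕ, pc b k * ((k : ℝ) * y ^ k) := by
    rw [← tsum_mul_left]
    apply tsum_congr
    intro k
    cases k with
    | zero => simp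
    | succ n =>
      simp only [Nat.add_sub_cancel]
      push_cast
      ring
  have hsub : (1 - y) * (∑' k : ℕ, pc b k * ((k : ℝ) * y ^ (k - 1))) =
      (∑' k : ℕ, pc b (k + 1) * (((k : ℝ) + 1) * y ^ k)) -
        ∑' k : ℕ, pc b k * ((k : ℝ) * y ^ k) := by
    rw [sub_mul, one_mul, hyD]
    rw [← hshift]
  rw [hsub, ← Summable.tsum_sub h1 h2]
  rw [← tsum_mul_left]
  apply tsum_congr
  intro k
  have hp := pc_succ b k
  calc pc b (k + 1) * (((k : ℝ) + 1) * y ^ k) - pc b k * ((k : ℝ) * y ^ k)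
      = (pc b (k + 1) * ((k : ℝ) + 1)) * y ^ k - pc b k * ((k : ℝ) * y ^ k) := by ring
    _ = ((b + k) * pc b k) * y ^ k - pc b k * ((k : ℝ) * y ^ k) := by rw [hp]
    _ = b * (pc b k * y ^ k) := by ring


lemma tsum_F_zero (b : ℝ) : (∑' k : ℕ, pc b k * (0:ℝ) ^ k) = 1 := by
  rw [tsum_eq_single 0 (fun k hk => by simp [zero_pow hk])]
  simp [pc_zero]

lemma binom {b : ℝ} (hb1 : -1 < b) (hb0 : b ≠ 0) {s : ℝ} (h0 : 0 ≤ s) (h1 : s < 1) :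
    HasSum (fun k : ℕ => pc b k * s ^ k) ((1 - s) ^ (-b)) := by
  have habs : |s| < 1 := by rw [abs_of_nonneg h0]; exact h1
  have hF := summable_F hb1 hb0 habs
  rw [hF.hasSum_iff]
  rcases eq_or_lt_of_le h0 with rfl | hs
  · rw [tsum_F_zero]
    simp
  · have key : ∀ z ∈ Icc (0:ℝ) s,
        HasDerivAt (fun t : ℝ => (1 - t) ^ b * ∑' k : ℕ, pc b k * t ^ k) 0 z := by
      intro z hz
      have hz1 : |z| < 1 := by
        rw [abs_of_nonneg hz.1]
        exact lt_of_le_of_lt hz.2 h1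
      have h1z : (0:ℝ) < 1 - z := by
        have := hz.2
        linarith
      have hA : HasDerivAt (fun t : ℝ => (1 - t) ^ b) ((-1) * b * (1 - z) ^ (b - 1)) z := by
        have hid : HasDerivAt (fun t : ℝ => 1 - t) (-1) z := by
          simpa using (hasDerivAt_id z).const_sub 1
        exact hid.rpow_const (Or.inl h1z.ne')
      have hB := hasDerivAt_F hb1 hb0 hz1
      have hprod := hA.mul hB
      refine hprod.congr_deriv ?_
      have hode := ode hb1 hb0 hz1
      have hsplit : (1 - z) ^ b = (1 - z) ^ (b - 1) * (1 - z) := by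
        rw [← Real.rpow_add_one h1z.ne' (b - 1)]
        norm_num
      rw [hsplit]
      linear_combination (((1:ℝ) - z) ^ (b - 1)) * hode
    have hconst := constant_of_has_deriv_right_zero
      (f := fun t : ℝ => (1 - t) ^ b * ∑' k : ℕ, pc b k * t ^ k)
      (fun z hz => (key z hz).continuousAt.continuousWithinAt)
      (fun z hz => (key z (Ico_subset_Icc_self hz)).hasDerivWithinAt)
      s (right_mem_Icc.mpr h0)
    simp only [sub_zero, Real.one_rpow, one_mul, tsum_F_zero] at hconst
    have hpos : (0:ℝ) < (1 - s) ^ b := Real.rpow_pos_of_pos (by linarith) b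
    rw [Real.rpow_neg (by linarith : (0:ℝ) ≤ 1 - s)]
    exact eq_inv_of_mul_eq_one_left (by rw [mul_comm]; exact hconst)


lemma asc_eval_one (k : ℕ) : (ascPochhammer ℝ k).eval (1:ℝ) = k.factorial := by
  induction k with
  | zero => simp
  | succ n ih =>
    rw [ascPochhammer_succ_eval, ih, Nat.factorial_succ]
    push_cast
    ring

lemma asc_eval_two (k : ℕ) : (ascPochhammer ℝ k).eval (2:ℝ) = (k + 1).factorial := by
  induction k with
  | zero => simp
  | succ n ih =>
    rw [ascPochhammer_succ_eval, ih,
      show (n + 1 + 1).factorial = (n + 1 + 1) * (n + 1).factorial from Nat.factorial_succ _]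
    push_cast
    ring

lemma asc_eval_succ_left (c : ℝ) (k : ℕ) :
    (ascPochhammer ℝ (k + 1)).eval c = c * (ascPochhammer ℝ k).eval (c + 1) := by
  induction k with
  | zero => simp [ascPochhammer_succ_eval]
  | succ n ih =>
    rw [ascPochhammer_succ_eval, ih, ascPochhammer_succ_eval]
    push_cast
    ring



lemma hyp_coeff (a : ℝ) (k : ℕ) :
    (ascPochhammer ℝ k).eval a * (ascPochhammer ℝ k).eval (1:ℝ) /
      ((ascPochhammer ℝ k).eval (2:ℝ) * (k.factorial : ℝ)) =
    (ascPochhammer ℝ k).eval a / (((k + 1).factorial : ℕ) : ℝ) := by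
  rw [asc_eval_one, asc_eval_two]
  have h1 : (k.factorial : ℝ) ≠ 0 := Nat.cast_ne_zero.mpr (Nat.factorial_ne_zero k)
  have h2 : (((k + 1).factorial : ℕ) : ℝ) ≠ 0 := Nat.cast_ne_zero.mpr (Nat.factorial_ne_zero _)
  field_simp

lemma hyp_eval_ne {a : ℝ} (ha1 : a ≠ 1) (ha : -1 < a - 1) {z : ℝ} (hz0 : 0 < z) (hz1 : z < 1) :
    (a - 1) * z * hyp2F1 a 1 2 z = (1 - z) ^ (1 - a) - 1 := by
  have hb0 : a - 1 ≠ 0 := sub_ne_zero.mpr ha1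
  have hbin := binom ha hb0 hz0.le hz1
  rw [show -(a - 1) = 1 - a by ring] at hbin
  have hsum := hbin.summable
  have hzero : (1 - z) ^ (1 - a) = 1 + ∑' k : ℕ, pc (a - 1) (k + 1) * z ^ (k + 1) := by
    rw [← hbin.tsum_eq, Summable.tsum_eq_zero_add hsum, pc_zero]
    simp
  have hterm : ∀ k : ℕ, pc (a - 1) (k + 1) * z ^ (k + 1) =
      ((a - 1) * z) * (((ascPochhammer ℝ k).eval a * (ascPochhammer ℝ k).eval (1:ℝ) /
        ((ascPochhammer ℝ k).eval (2:ℝ) * (k.factorial : ℝ))) * z ^ k) := by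
    intro k
    rw [hyp_coeff]
    unfold pc
    rw [asc_eval_succ_left, show a - 1 + 1 = a by ring, pow_succ]
    ring
  rw [hzero]
  unfold hyp2F1
  rw [← tsum_mul_left]
  rw [tsum_congr hterm]
  ring

lemma hyp_eval_one {z : ℝ} (hz0 : 0 < z) (hz1 : z < 1) :
    z * hyp2F1 1 1 2 z = - Real.log (1 - z) := by
  have hlog := Real.hasSum_pow_div_log_of_abs_lt_one
    (x := z) (by rw [abs_of_nonneg hz0.le]; exact hz1)
  unfold hyp2F1
  rw [← hlog.tsum_eq, ← tsum_mul_left]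
  apply tsum_congr
  intro k
  rw [asc_eval_one, asc_eval_two,
    show (k + 1).factorial = (k + 1) * k.factorial from Nat.factorial_succ _]
  have h1 : (k.factorial : ℝ) ≠ 0 := Nat.cast_ne_zero.mpr (Nat.factorial_ne_zero k)
  have h2 : ((k : ℝ) + 1) ≠ 0 := by positivity
  push_cast
  rw [pow_succ]
  field_simp


lemma kernel_eq {ν x y : ℝ} (hν : 0 ≤ ν) (hx : 0 < x) (hxy : x < y) :
    ((y ^ 2 - x ^ 2) / (2 * y)) * hyp2F1 ((ν + 1) / 2) 1 2 (1 - x ^ 2 / y ^ 2) =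
      y ^ ν * ∫ t in x..y, t ^ (-ν) := by
  have hy : 0 < y := hx.trans hxy
  have hy2 : (0:ℝ) < y ^ 2 := by positivity
  have hx2 : (0:ℝ) < x ^ 2 := by positivity
  have hlt : x ^ 2 < y ^ 2 := by nlinarith
  have hz0 : 0 < 1 - x ^ 2 / y ^ 2 := by
    rw [sub_pos, div_lt_one hy2]; exact hlt
  have hz1 : 1 - x ^ 2 / y ^ 2 < 1 := by
    have : 0 < x ^ 2 / y ^ 2 := by positivity
    linarith
  have hne : y ^ 2 - x ^ 2 ≠ 0 := by nlinarith
  have h0mem : (0:ℝ) ∉ uIcc x y := by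
    rw [uIcc_of_le hxy.le]
    rintro ⟨h0, -⟩
    exact absurd h0 (not_le.mpr hx)
  by_cases hν1 : ν = 1
  · subst hν1
    rw [show ((1:ℝ) + 1) / 2 = 1 by norm_num]
    have hh := hyp_eval_one hz0 hz1
    rw [show (1:ℝ) - (1 - x ^ 2 / y ^ 2) = x ^ 2 / y ^ 2 by ring] at hh
    have hint : (∫ t in x..y, t ^ (-(1:ℝ))) = Real.log y - Real.log x := by
      have : ∀ t : ℝ, t ^ (-(1:ℝ)) = t⁻¹ := fun t => Real.rpow_neg_one t
      simp_rw [this]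
      rw [integral_inv h0mem, Real.log_div hy.ne' hx.ne']
    rw [hint, Real.rpow_one]
    have hlogx2 : Real.log (x ^ 2 / y ^ 2) = 2 * Real.log x - 2 * Real.log y := by
      rw [Real.log_div hx2.ne' hy2.ne', Real.log_pow, Real.log_pow]
      push_cast; ring
    rw [hlogx2] at hh
    -- hh : (1 - x^2/y^2) * H = -(2 log x - 2 log y)
    set H := hyp2F1 1 1 2 (1 - x ^ 2 / y ^ 2) with hH
    have hzv : 1 - x ^ 2 / y ^ 2 = (y ^ 2 - x ^ 2) / y ^ 2 := by field_simp
    rw [hzv] at hh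
    field_simp at hh
    -- solve for goal
    field_simp
    linear_combination hh
  · have ha1 : (ν + 1) / 2 ≠ 1 := by
      intro h
      apply hν1
      field_simp at h
      linarith
    have ha : -1 < (ν + 1) / 2 - 1 := by linarith
    have hh := hyp_eval_ne ha1 ha hz0 hz1
    rw [show (1:ℝ) - (1 - x ^ 2 / y ^ 2) = x ^ 2 / y ^ 2 by ring,
      show (1:ℝ) - (ν + 1) / 2 = (1 - ν) / 2 by ring] at hh
    have hxp : (x ^ 2 / y ^ 2) ^ ((1 - ν) / 2) = x ^ (1 - ν) / y ^ (1 - ν) := by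
      rw [Real.div_rpow (by positivity) (by positivity)]
      congr 1
      · rw [← Real.rpow_natCast x 2, ← Real.rpow_mul hx.le]
        congr 1
        push_cast
        ring
      · rw [← Real.rpow_natCast y 2, ← Real.rpow_mul hy.le]
        congr 1
        push_cast
        ring
    rw [hxp] at hh
    have hint : (∫ t in x..y, t ^ (-ν)) = (y ^ (1 - ν) - x ^ (1 - ν)) / (1 - ν) := by
      rw [integral_rpow (Or.inr ⟨fun h => hν1 (by linarith [neg_injective h]), h0mem⟩)]
      rw [show -ν + 1 = 1 - ν by ring]
    rw [hint]
    have hCB : y ^ ν * y ^ (1 - ν) = y := by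
      rw [← Real.rpow_add hy]; norm_num
    have hB : (0:ℝ) < y ^ (1 - ν) := Real.rpow_pos_of_pos hy _
    have hν1' : (1:ℝ) - ν ≠ 0 := fun h => hν1 (by linarith)
    set A := x ^ (1 - ν) with hA
    set B := y ^ (1 - ν) with hBdef
    set C := y ^ ν with hC
    set H := hyp2F1 ((ν + 1) / 2) 1 2 (1 - x ^ 2 / y ^ 2) with hH
    -- hh : ((ν+1)/2 - 1) * (1 - x^2/y^2) * H = A / B - 1
    have hzv : 1 - x ^ 2 / y ^ 2 = (y ^ 2 - x ^ 2) / y ^ 2 := by field_simp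
    rw [hzv] at hh
    field_simp at hh
    -- goal : ((y^2 - x^2)/(2*y)) * H = C * ((B - A)/(1 - ν))
    field_simp
    have hgoal : ((y ^ 2 - x ^ 2) * H * (1 - ν)) * B = (y * 2 * C * (B - A)) * B := by
      linear_combination (-1:ℝ) * hh - (2 * y * (B - A)) * hCB
    exact mul_right_cancel₀ hB.ne' hgoal

end BesselAux

open BesselAux in
/-- The fractional Bessel integral of order `1` inverts the Bessel operator. -/
theorem besselFracInt_one_left_inverse (ν : ℝ) (hν : 0 ≤ ν)
    (g : ℝ → ℝ) (hg : ContDiffOn ℝ 2 g (Set.Ioi 0))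
    (hvanish : ∃ M : ℝ, ∀ y ≥ M, g y = 0) :
    ∀ x > (0:ℝ),
      besselFracInt ν 1 (besselOp ν g) x =
        (∫ y in Set.Ioi x, ((y^2 - x^2) / (2 * y)) *
          hyp2F1 ((ν + 1) / 2) 1 2 (1 - x^2 / y^2) *
          (deriv (deriv g) y + (ν / y) * deriv g y)) ∧
      besselFracInt ν 1 (besselOp ν g) x = g x := by
  intro x hx
  obtain ⟨M₀, hM₀⟩ := hvanish
  set M : ℝ := max (x + 1) (M₀ + 1) with hMdef
  have hxM : x < M := lt_of_lt_of_le (by linarith) (le_max_left _ _)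
  have hM0M : M₀ < M := lt_of_lt_of_le (by linarith) (le_max_right _ _)
  have hMpos : 0 < M := hx.trans hxM
  have hgz : ∀ y : ℝ, M₀ < y → g y = 0 := fun y hy => hM₀ y hy.le
  have hdgz : ∀ y : ℝ, M₀ < y → deriv g y = 0 := by
    intro y hy
    have hev : g =ᶠ[nhds y] fun _ => (0:ℝ) :=
      Filter.eventuallyEq_of_mem (Ioi_mem_nhds hy) (fun t ht => hgz t ht)
    rw [hev.deriv_eq, deriv_const]
  have hddgz : ∀ y : ℝ, M₀ < y → deriv (deriv g) y = 0 := by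
    intro y hy
    have hev : deriv g =ᶠ[nhds y] fun _ => (0:ℝ) :=
      Filter.eventuallyEq_of_mem (Ioi_mem_nhds hy) (fun t ht => hdgz t ht)
    rw [hev.deriv_eq, deriv_const]
  -- smoothness facts
  have hdg : ContDiffOn ℝ 1 (deriv g) (Ioi 0) :=
    hg.deriv_of_isOpen isOpen_Ioi (by norm_num)
  have hcdg : ContinuousOn (deriv g) (Ioi 0) := hdg.continuousOn
  have hcddg : ContinuousOn (deriv (deriv g)) (Ioi 0) :=
    hdg.continuousOn_deriv_of_isOpen isOpen_Ioi le_rfl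
  have hdiffg : DifferentiableOn ℝ g (Ioi 0) := hg.differentiableOn (by norm_num)
  have hdiffdg : DifferentiableOn ℝ (deriv g) (Ioi 0) := hdg.differentiableOn one_ne_zero
  have hddg_at : ∀ y : ℝ, 0 < y → HasDerivAt (deriv g) (deriv (deriv g) y) y := fun y hy =>
    (hdiffdg.differentiableAt (Ioi_mem_nhds hy)).hasDerivAt
  -- the antiderivative ψ
  set ψ : ℝ → ℝ := fun t => ∫ s in x..t, s ^ (-ν) with hψdef
  have hcontOn_rpow : ∀ c : ℝ, ContinuousOn (fun t : ℝ => t ^ c) (Ioi 0) := fun c t ht =>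
    (Real.continuousAt_rpow_const t c (Or.inl (ne_of_gt ht))).continuousWithinAt
  have hInt : ∀ y : ℝ, 0 < y → IntervalIntegrable (fun t : ℝ => t ^ (-ν)) volume x y := by
    intro y hy
    apply ContinuousOn.intervalIntegrable
    intro t ht
    have h1 : 0 < t := by
      rcases mem_uIcc.mp ht with ⟨h1, -⟩ | ⟨h1, -⟩ <;> linarith
    exact (Real.continuousAt_rpow_const t (-ν) (Or.inl (ne_of_gt h1))).continuousWithinAt
  have hψ_deriv : ∀ y : ℝ, 0 < y → HasDerivAt ψ (y ^ (-ν)) y := by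
    intro y hy
    exact intervalIntegral.integral_hasDerivAt_right (hInt y hy)
      (ContinuousOn.stronglyMeasurableAtFilter isOpen_Ioi (hcontOn_rpow (-ν)) y hy)
      (Real.continuousAt_rpow_const y (-ν) (Or.inl (ne_of_gt hy)))
  have hψx : ψ x = 0 := intervalIntegral.integral_same
  -- the rewritten integrand
  set f : ℝ → ℝ := fun y => (y ^ ν * ψ y) * (deriv (deriv g) y + ν / y * deriv g y) with hfdef
  have hIccsub : Icc x M ⊆ Ioi 0 := fun t ht => lt_of_lt_of_le hx ht.1
  have hcont_f : ContinuousOn f (Icc x M) := by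
    apply ContinuousOn.mul
    · exact ((hcontOn_rpow ν).mono hIccsub).mul
        (fun y hy => (hψ_deriv y (hIccsub hy)).continuousAt.continuousWithinAt)
    · exact (hcddg.mono hIccsub).add
        (((continuousOn_const.div continuousOn_id
          (fun y hy => ne_of_gt (hIccsub hy))).mul (hcdg.mono hIccsub)))
  have hzero2 : EqOn f (fun _ => (0:ℝ)) (Ioi M) := by
    intro y hy
    have h1 : M₀ < y := hM0M.trans hy
    simp [hfdef, hddgz y h1, hdgz y h1]
  have hint1 : IntegrableOn f (Ioc x M) :=
    (hcont_f.integrableOn_Icc).mono_set Ioc_subset_Icc_self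
  have hint2 : IntegrableOn f (Ioi M) := by
    rw [integrableOn_congr_fun hzero2 measurableSet_Ioi]
    exact integrableOn_zero
  -- main computation
  have hmain : (∫ y in Set.Ioi x, ((y^2 - x^2) / (2 * y)) *
      hyp2F1 ((ν + 1) / 2) 1 2 (1 - x^2 / y^2) *
      (deriv (deriv g) y + (ν / y) * deriv g y)) = g x := by
    have e1 : (∫ y in Set.Ioi x, ((y^2 - x^2) / (2 * y)) *
        hyp2F1 ((ν + 1) / 2) 1 2 (1 - x^2 / y^2) *
        (deriv (deriv g) y + (ν / y) * deriv g y)) = ∫ y in Set.Ioi x, f y := by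
      apply setIntegral_congr_fun measurableSet_Ioi
      intro y hy
      have hk := kernel_eq hν hx hy
      simp only [hfdef]
      rw [hk]
    rw [e1]
    have e2 : (∫ y in Set.Ioi x, f y) = ∫ y in Set.Ioc x M, f y := by
      rw [← Ioc_union_Ioi_eq_Ioi hxM.le,
        setIntegral_union (Ioc_disjoint_Ioi le_rfl) measurableSet_Ioi hint1 hint2,
        setIntegral_congr_fun measurableSet_Ioi hzero2]
      simp
    rw [e2, ← intervalIntegral.integral_of_le hxM.le]
    have e3 : (∫ y in x..M, f y) = ∫ y in x..M, ψ y *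
        (y ^ ν * (deriv (deriv g) y + ν / y * deriv g y)) := by
      apply intervalIntegral.integral_congr
      intro y hy
      simp only [hfdef]
      ring
    rw [e3]
    have huIcc : uIcc x M = Icc x M := uIcc_of_le hxM.le
    have hpos_mem : ∀ y ∈ uIcc x M, 0 < y := by
      intro y hy
      rw [huIcc] at hy
      exact hIccsub hy
    have e4 : (∫ y in x..M, ψ y * (y ^ ν * (deriv (deriv g) y + ν / y * deriv g y))) =
        ψ M * (M ^ ν * deriv g M) - ψ x * (x ^ ν * deriv g x) -
          ∫ y in x..M, y ^ (-ν) * (y ^ ν * deriv g y) := by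
      apply intervalIntegral.integral_mul_deriv_eq_deriv_mul
        (u := ψ) (u' := fun y : ℝ => y ^ (-ν))
        (v := fun y : ℝ => y ^ ν * deriv g y)
        (v' := fun y : ℝ => y ^ ν * (deriv (deriv g) y + ν / y * deriv g y))
      · exact fun y hy => hψ_deriv y (hpos_mem y hy)
      · intro y hy
        have hy0 : 0 < y := hpos_mem y hy
        have h1 : HasDerivAt (fun t : ℝ => t ^ ν) (ν * y ^ (ν - 1)) y :=
          Real.hasDerivAt_rpow_const (Or.inl hy0.ne')
        have h2 := h1.mul (hddg_at y hy0)
        refine h2.congr_deriv ?_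
        have hr : y ^ (ν - 1) = y ^ ν / y := by
          rw [Real.rpow_sub hy0, Real.rpow_one]
        rw [hr]
        field_simp
        ring
      · exact hInt M hMpos
      · apply ContinuousOn.intervalIntegrable
        rw [huIcc]
        exact ((hcontOn_rpow ν).mono hIccsub).mul
          ((hcddg.mono hIccsub).add
            (((continuousOn_const.div continuousOn_id
              (fun y hy => ne_of_gt (hIccsub hy))).mul (hcdg.mono hIccsub))))
    rw [e4, hψx, hdgz M hM0M]
    have e5 : (∫ y in x..M, y ^ (-ν) * (y ^ ν * deriv g y)) = ∫ y in x..M, deriv g y := by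
      apply intervalIntegral.integral_congr
      intro y hy
      have hy0 : 0 < y := hpos_mem y hy
      have h1 : y ^ (-ν) * y ^ ν = 1 := by
        rw [← Real.rpow_add hy0]
        simp
      show y ^ (-ν) * (y ^ ν * deriv g y) = deriv g y
      rw [← mul_assoc, h1, one_mul]
    rw [e5, intervalIntegral.integral_deriv_eq_sub
      (fun y hy => hdiffg.differentiableAt (Ioi_mem_nhds (hpos_mem y hy)))
      (by apply ContinuousOn.intervalIntegrable; rw [huIcc]; exact hcdg.mono hIccsub),
      hgz M hM0M]
    ring
  have hfirst : besselFracInt ν 1 (besselOp ν g) x =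
      ∫ y in Set.Ioi x, ((y^2 - x^2) / (2 * y)) *
        hyp2F1 ((ν + 1) / 2) 1 2 (1 - x^2 / y^2) *
        (deriv (deriv g) y + (ν / y) * deriv g y) := by
    unfold besselFracInt besselOp
    norm_num [Real.Gamma_two, Real.rpow_one]
    rw [show (1:ℝ) + (ν - 1) / 2 = (ν + 1) / 2 by ring]
  exact ⟨hfirst, hfirst.trans hmain⟩
end
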